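/- Let M be a kG-module with non-degenerate G-invariant symmetric form B and adjoint σ, H ≤ G, and θ a σ-invariant unit of E_G(M). If θ = tr_H^G(α) for some σ-invariant α ∈ E_H(M), then the map m ↦ Σ_{g ∈ G/H} g ⊗ α(g⁻¹m) is a kG-linear isometry from (M, B_θ) into the induced symmetric module Ind_H^G(α M, B̂_α). Conversely, if (M, B_θ) admits a kG-linear isometric embedding into some induced symmetric module Ind_H^G(L, B₁), then θ = tr_H^G(α) for some σ-invariant α ∈ E_H(M). -/

import Mathlib

/-- Membership condition describing the induced module `Ind_H^G L` inside `G → L`. -/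
def IndCond9 {k G L : Type*} [Field k] [Group G] [AddCommGroup L] [Module k L]
    (H : Subgroup G) (ρL : Representation k H L) (f : G → L) : Prop :=
  ∀ (h : H) (g : G), f (g * (h : G)) = ρL h⁻¹ (f g)

/-- Symmetric analogue of Higman's criterion. Forward: if `θ = tr_H^G α` with `α` a
`σ`-invariant `H`-endomorphism, then `m ↦ (x ↦ α (ρ x⁻¹ m))` is a `kG`-linear isometry
from `(M, B_θ)` into `Ind_H^G (α M, B̂_α)`. Converse: an isometric `kG`-embedding of
`(M, B_θ)` into an induced symmetric module `Ind_H^G (L, B₁)` yields such an `α`. -/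
theorem stmt9 {k G M L : Type*} [Field k] [Group G] [Fintype G]
    [AddCommGroup M] [Module k M] [FiniteDimensional k M]
    [AddCommGroup L] [Module k L] [FiniteDimensional k L]
    (H : Subgroup G) [Fintype (G ⧸ H)]
    (ρ : Representation k G M)
    (B : M →ₗ[k] M →ₗ[k] k)
    (hsymm : ∀ m₁ m₂ : M, B m₁ m₂ = B m₂ m₁)
    (hnd : ∀ m : M, (∀ m' : M, B m m' = 0) → m = 0)
    (hinv : ∀ (g : G) (m₁ m₂ : M), B (ρ g m₁) (ρ g m₂) = B m₁ m₂)
    (σ : (M →ₗ[k] M) → (M →ₗ[k] M))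
    (hσ : ∀ (f : M →ₗ[k] M) (m₁ m₂ : M), B m₁ (f m₂) = B (σ f m₁) m₂)
    (θ : M →ₗ[k] M)
    (hθG : ∀ g : G, θ ∘ₗ (ρ g : M →ₗ[k] M) = (ρ g : M →ₗ[k] M) ∘ₗ θ)
    (hθσ : σ θ = θ)
    (hθunit : Function.Bijective θ) :
    -- forward direction
    (∀ α : M →ₗ[k] M,
      (∀ h : H, α ∘ₗ (ρ (h : G) : M →ₗ[k] M) = (ρ (h : G) : M →ₗ[k] M) ∘ₗ α) →
      σ α = α →
      θ = ∑ c : G ⧸ H,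
        (ρ (Quotient.out c) : M →ₗ[k] M) ∘ₗ α ∘ₗ (ρ (Quotient.out c)⁻¹ : M →ₗ[k] M) →
      -- Φ m := fun x => α (ρ x⁻¹ m) lands in the induced module on α M ...
      (∀ m : M, IndCond9 H (MonoidHom.comp ρ H.subtype) (fun x : G => α (ρ x⁻¹ m))) ∧
      (∀ (m : M) (x : G), α (ρ x⁻¹ m) ∈ LinearMap.range α) ∧
      -- ... is kG-linear ...
      (∀ (g : G) (m : M) (x : G), α (ρ x⁻¹ (ρ g m)) = α (ρ (g⁻¹ * x)⁻¹ m)) ∧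
      (Function.Injective fun m : M => fun x : G => α (ρ x⁻¹ m)) ∧
      -- ... and is an isometry from (M, B_θ) onto its image with the induced form B̂_α^G
      (∀ m₁ m₂ : M,
        ∑ c : G ⧸ H, B (α (ρ (Quotient.out c)⁻¹ m₁)) (ρ (Quotient.out c)⁻¹ m₂) =
          B (θ m₁) m₂)) ∧
    -- converse direction
    (∀ (ρL : Representation k H L) (B₁ : L →ₗ[k] L →ₗ[k] k),
      (∀ l₁ l₂ : L, B₁ l₁ l₂ = B₁ l₂ l₁) →
      (∀ l : L, (∀ l' : L, B₁ l l' = 0) → l = 0) →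
      (∀ (h : H) (l₁ l₂ : L), B₁ (ρL h l₁) (ρL h l₂) = B₁ l₁ l₂) →
      ∀ Ψ : M →ₗ[k] (G → L),
        (∀ m : M, IndCond9 H ρL (Ψ m)) →
        (∀ (g : G) (m : M) (x : G), Ψ (ρ g m) x = Ψ m (g⁻¹ * x)) →
        Function.Injective Ψ →
        (∀ m₁ m₂ : M,
          ∑ c : G ⧸ H, B₁ (Ψ m₁ (Quotient.out c)) (Ψ m₂ (Quotient.out c)) =
            B (θ m₁) m₂) →
        ∃ α : M →ₗ[k] M,
          (∀ h : H, α ∘ₗ (ρ (h : G) : M →ₗ[k] M) = (ρ (h : G) : M →ₗ[k] M) ∘ₗ α) ∧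
          σ α = α ∧
          θ = ∑ c : G ⧸ H,
            (ρ (Quotient.out c) : M →ₗ[k] M) ∘ₗ α ∘ₗ (ρ (Quotient.out c)⁻¹ : M →ₗ[k] M)) := by
  -- auxiliary facts
  have hcancel : ∀ (g : G) (b : M), ρ g (ρ g⁻¹ b) = b := by
    intro g b
    rw [← Module.End.mul_apply, ← map_mul, mul_inv_cancel, map_one, Module.End.one_apply]
  have hinv' : ∀ (g : G) (a b : M), B (ρ g a) b = B a (ρ g⁻¹ b) := by
    intro g a b
    calc B (ρ g a) b = B (ρ g a) (ρ g (ρ g⁻¹ b)) := by rw [hcancel]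
      _ = B a (ρ g⁻¹ b) := hinv g a _
  have eqB : ∀ a b : M, (∀ m : M, B a m = B b m) → a = b := by
    intro a b h
    have h0 : a - b = 0 := hnd (a - b) (fun m' => by
      simp [LinearMap.sub_apply, h m'])
    exact sub_eq_zero.mp h0
  constructor
  · -- forward
    intro α hα hασ hθtr
    refine ⟨?_, ?_, ?_, ?_, ?_⟩
    · intro m h g
      have h1 := LinearMap.congr_fun (hα h⁻¹) (ρ g⁻¹ m)
      simp only [LinearMap.comp_apply] at h1
      simp only [MonoidHom.comp_apply, Subgroup.coe_subtype]
      have : ρ (g * (h : G))⁻¹ m = ρ ((h : G)⁻¹) (ρ g⁻¹ m) := by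
        rw [← Module.End.mul_apply, ← map_mul, mul_inv_rev]
      rw [this]
      simpa using h1
    · intro m x
      exact ⟨ρ x⁻¹ m, rfl⟩
    · intro g m x
      have : ρ x⁻¹ (ρ g m) = ρ (g⁻¹ * x)⁻¹ m := by
        rw [← Module.End.mul_apply, ← map_mul, mul_inv_rev, inv_inv]
      rw [this]
    · intro m m' hmm'
      apply hθunit.1
      rw [hθtr]
      simp only [LinearMap.sum_apply, LinearMap.comp_apply]
      exact Finset.sum_congr rfl fun c _ =>
        congrArg _ (congrFun hmm' (Quotient.out c))
    · intro m₁ m₂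
      rw [hθtr]
      simp only [LinearMap.sum_apply, LinearMap.comp_apply, map_sum,
        LinearMap.sum_apply]
      exact Finset.sum_congr rfl fun c _ => (hinv' _ _ _).symm
  · -- converse
    intro ρL B₁ h₁symm h₁nd h₁inv Ψ hind hequiv hinj hiso
    have h₁cancel : ∀ (h : H) (b : L), ρL h (ρL h⁻¹ b) = b := by
      intro h b
      rw [← Module.End.mul_apply, ← map_mul, mul_inv_cancel, map_one, Module.End.one_apply]
    have h₁inv' : ∀ (h : H) (a b : L), B₁ (ρL h a) b = B₁ a (ρL h⁻¹ b) := by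
      intro h a b
      calc B₁ (ρL h a) b = B₁ (ρL h a) (ρL h (ρL h⁻¹ b)) := by rw [h₁cancel]
        _ = B₁ a (ρL h⁻¹ b) := h₁inv h a _
    -- Ψ m (g * 1) = Ψ (ρ g⁻¹ m) 1
    have hΨ : ∀ (g : G) (m : M), Ψ (ρ g⁻¹ m) 1 = Ψ m g := by
      intro g m
      rw [hequiv g⁻¹ m 1, inv_inv, mul_one]
    have hΨh : ∀ (h : H) (m : M), Ψ (ρ (h : G) m) 1 = ρL h (Ψ m 1) := by
      intro h m
      have := hind m h⁻¹ 1
      simp only [one_mul, inv_inv] at this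
      rw [hequiv (h : G) m 1, mul_one]
      have hc : ((h⁻¹ : H) : G) = ((h : G))⁻¹ := rfl
      rw [← hc, this]
    set Ψ₁ : M →ₗ[k] L := (LinearMap.proj (1 : G)) ∘ₗ Ψ with hΨ₁
    have hΨ₁app : ∀ m : M, Ψ₁ m = Ψ m 1 := fun m => rfl
    set C : M →ₗ[k] M →ₗ[k] k := B₁.compl₁₂ Ψ₁ Ψ₁ with hC
    have hBnd : LinearMap.BilinForm.Nondegenerate B :=
      ⟨hnd, fun y hy => hnd y fun x => (hsymm y x).trans (hy x)⟩
    set α : M →ₗ[k] M :=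
      ((LinearMap.BilinForm.toDual B hBnd).symm.toLinearMap) ∘ₗ C with hαdef
    have key : ∀ m n : M, B (α m) n = B₁ (Ψ m 1) (Ψ n 1) := by
      intro m n
      have : B (α m) n = C m n := by
        simp only [hαdef, LinearMap.comp_apply, LinearEquiv.coe_coe]
        exact LinearMap.BilinForm.apply_toDual_symm_apply (C m) n
      rw [this]
      simp [hC, LinearMap.compl₁₂_apply, hΨ₁app]
    refine ⟨α, ?_, ?_, ?_⟩
    · intro h
      apply LinearMap.ext
      intro m
      apply eqB
      intro n
      simp only [LinearMap.comp_apply]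
      calc B (α (ρ (h : G) m)) n = B₁ (Ψ (ρ (h : G) m) 1) (Ψ n 1) := key _ _
        _ = B₁ (ρL h (Ψ m 1)) (Ψ n 1) := by rw [hΨh]
        _ = B₁ (Ψ m 1) (ρL h⁻¹ (Ψ n 1)) := h₁inv' _ _ _
        _ = B₁ (Ψ m 1) (Ψ (ρ ((h : G))⁻¹ n) 1) := by
            have := hΨh h⁻¹ n
            have hc : ((h⁻¹ : H) : G) = ((h : G))⁻¹ := rfl
            rw [hc] at this
            rw [this]
        _ = B (α m) (ρ ((h : G))⁻¹ n) := (key _ _).symm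
        _ = B (ρ (h : G) (α m)) n := (hinv' _ _ _).symm
    · apply LinearMap.ext
      intro m
      apply eqB
      intro n
      calc B (σ α m) n = B m (α n) := (hσ α m n).symm
        _ = B (α n) m := hsymm _ _
        _ = B₁ (Ψ n 1) (Ψ m 1) := key _ _
        _ = B₁ (Ψ m 1) (Ψ n 1) := h₁symm _ _
        _ = B (α m) n := (key _ _).symm
    · apply LinearMap.ext
      intro m
      apply eqB
      intro n
      rw [← hiso m n]
      simp only [LinearMap.sum_apply, LinearMap.comp_apply, map_sum]
      exact Finset.sum_congr rfl fun c _ => by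
        rw [hinv', key, hΨ, hΨ]
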